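/- Dual-space form of a uniform stochastic instrument composed with a unitary (Lemma 1 of the paper): let n, m ∈ ℕ, let p : Z2^n × Z2^n × V_m → ℝ, and let λ be its Pauli-fidelity transform λ(x,y,Q) := Σ_{a,b,P} (-1)^{a·x + b·y + ⟨P,Q⟩} p(a,b,P). Let G be a unitary matrix on the (m+n)-qubit space. Then for every k ∈ Z2^n and every complex matrix ρ on the (m+n)-qubit space: Σ_{a,b ∈ Z2^n, P ∈ V_m} p(a,b,P) · (W(P) ⊗ E_{k+b,k+a}) (G ρ G†) (W(P) ⊗ E_{k+b,k+a})† = 2^{-(2n+m)} · Σ_{x,y ∈ Z2^n, Q ∈ V_m} (-1)^{k·(x+y)} λ(x,y,Q) · Tr(G† (W(Q) ⊗ Z^x) G · ρ) · (W(Q) ⊗ Z^y). -/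

import Mathlib

open Finset Matrix Kronecker
set_option maxHeartbeats 1000000

/-- `m`-qubit Pauli operators modulo phase, as pairs of X- and Z-exponents per qubit. -/
abbrev V (m : ℕ) := Fin m → ZMod 2 × ZMod 2

/-- Symplectic inner product recording (non-)commutation of Pauli operators. -/
def sympl {m : ℕ} (P Q : V m) : ZMod 2 :=
  ∑ i, ((P i).1 * (Q i).2 + (P i).2 * (Q i).1)

/-- Dot product on `Z2^n`. -/
def dot {n : ℕ} (x y : Fin n → ZMod 2) : ZMod 2 := ∑ i, x i * y i

/-- The real sign `(-1)^z` associated with `z : ZMod 2`. -/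
def sgn (z : ZMod 2) : ℝ := (-1 : ℝ) ^ z.val

/-- The Hermitian Pauli matrix labeled by `v : V n`, with entries
`W(v)_{j,k} = i^{s(v)} (-1)^{Σ_i (v i).2 k_i} [j = k + a(v)]`. -/
noncomputable def W {n : ℕ} (v : V n) :
    Matrix (Fin n → ZMod 2) (Fin n → ZMod 2) ℂ := fun j k =>
  Complex.I ^ (Finset.univ.filter (fun i => (v i).1 = 1 ∧ (v i).2 = 1)).card *
    (-1 : ℂ) ^ (∑ i, (v i).2 * k i : ZMod 2).val *
    (if j = (fun i => k i + (v i).1) then 1 else 0)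

/-- `Z^x`: the purely-Z Pauli matrix with Z-exponents `x`. -/
noncomputable def Zpow {n : ℕ} (x : Fin n → ZMod 2) :
    Matrix (Fin n → ZMod 2) (Fin n → ZMod 2) ℂ :=
  W (fun i => ((0 : ZMod 2), x i))

/-- Matrices on the `(m+n)`-qubit space, indexed as a product of the
`m`-qubit and `n`-qubit computational-basis index sets. -/
abbrev MatP (m n : ℕ) :=
  Matrix ((Fin m → ZMod 2) × (Fin n → ZMod 2)) ((Fin m → ZMod 2) × (Fin n → ZMod 2)) ℂ

section Helpers
variable {m n : ℕ}

noncomputable def chi (z : ZMod 2) : ℂ := (-1 : ℂ) ^ z.val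

lemma chi_zero : chi 0 = 1 := by simp [chi]
lemma chi_one : chi 1 = -1 := by simp [chi, show (1:ZMod 2).val = 1 from rfl]
lemma chi_add (a b : ZMod 2) : chi (a + b) = chi a * chi b := by
  have h01 : ∀ z : ZMod 2, z = 0 ∨ z = 1 := by decide
  rcases h01 a with rfl | rfl <;> rcases h01 b with rfl | rfl <;>
    simp [show ((1:ZMod 2)+1) = 0 by decide, chi_zero, chi_one]
lemma chi_sum {ι : Type*} (s : Finset ι) (f : ι → ZMod 2) :
    chi (∑ i ∈ s, f i) = ∏ i ∈ s, chi (f i) := by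
  induction s using Finset.cons_induction with
  | empty => simp [chi_zero]
  | cons i s hi ih => simp [Finset.sum_cons, Finset.prod_cons, chi_add, ih]
lemma chi_natCast (c : ℕ) : chi ((c : ℕ) : ZMod 2) = (-1 : ℂ) ^ c := by
  unfold chi
  rw [ZMod.val_natCast]
  conv_rhs => rw [← Nat.mod_add_div c 2, pow_add, pow_mul]
  norm_num
lemma chi_conj (z : ZMod 2) : (starRingEnd ℂ) (chi z) = chi z := by
  unfold chi; rw [map_pow]; norm_num
lemma sgn_cast (z : ZMod 2) : ((sgn z : ℝ) : ℂ) = chi z := by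
  unfold sgn chi; push_cast; ring

lemma dot_comm (x y : Fin n → ZMod 2) : dot x y = dot y x := by
  unfold dot; exact Finset.sum_congr rfl fun i _ => mul_comm _ _
lemma dot_add_right (x y z : Fin n → ZMod 2) :
    dot x (y + z) = dot x y + dot x z := by
  unfold dot; rw [← Finset.sum_add_distrib]
  exact Finset.sum_congr rfl fun i _ => by simp [Pi.add_apply, mul_add]
lemma dot_add_left (x y z : Fin n → ZMod 2) :
    dot (x + y) z = dot x z + dot y z := by
  rw [dot_comm, dot_add_right, dot_comm z x, dot_comm z y]

lemma chi_single (z : ZMod 2) : (∑ t : ZMod 2, chi (t * z)) = if z = 0 then 2 else 0 := by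
  have h01 : ∀ z : ZMod 2, z = 0 ∨ z = 1 := by decide
  rcases h01 z with rfl | rfl <;>
    norm_num [show (Finset.univ : Finset (ZMod 2)) = {0, 1} from rfl, chi_zero, chi_one,
      Finset.sum_insert, Finset.mem_singleton, show ¬((1:ZMod 2) = 0) by decide]

lemma char_sum (c : Fin n → ZMod 2) :
    (∑ x : Fin n → ZMod 2, chi (dot x c)) = if c = 0 then (2 : ℂ) ^ n else 0 := by
  have h1 : ∀ x : Fin n → ZMod 2, chi (dot x c) = ∏ i, chi (x i * c i) := fun x =>
    chi_sum _ _
  simp_rw [h1]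
  have h2 : (∑ x : Fin n → ZMod 2, ∏ i, chi (x i * c i))
      = ∏ i, ∑ t : ZMod 2, chi (t * c i) := by
    rw [Finset.prod_univ_sum, ← Fintype.piFinset_univ]
  rw [h2]
  simp_rw [chi_single]
  by_cases hc : c = 0
  · subst hc; simp
  · rw [if_neg hc]
    obtain ⟨i, hi⟩ := Function.ne_iff.mp hc
    refine Finset.prod_eq_zero (Finset.mem_univ i) ?_
    simp only [Pi.zero_apply] at hi
    simp [hi]

lemma W_pair (α β : Fin m → ZMod 2) (j k : Fin m → ZMod 2) :
    W (fun i => (α i, β i)) j k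
      = Complex.I ^ (Finset.univ.filter (fun i => α i = 1 ∧ β i = 1)).card *
        chi (dot β k) * (if j = k + α then 1 else 0) := rfl

lemma W_apply (v : V m) (j k : Fin m → ZMod 2) :
    W v j k
      = Complex.I ^ (Finset.univ.filter (fun i => (v i).1 = 1 ∧ (v i).2 = 1)).card *
        chi (dot (fun i => (v i).2) k) *
        (if j = k + (fun i => (v i).1) then 1 else 0) := rfl

lemma sympl_pair (P : V m) (α β : Fin m → ZMod 2) :
    sympl P (fun i => (α i, β i))
      = dot (fun i => (P i).1) β + dot (fun i => (P i).2) α := by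
  unfold sympl dot; rw [← Finset.sum_add_distrib]

lemma sum_V {M : Type*} [AddCommMonoid M] (f : V m → M) :
    ∑ Q : V m, f Q
      = ∑ α : Fin m → ZMod 2, ∑ β : Fin m → ZMod 2, f (fun i => (α i, β i)) := by
  have h : ∑ Q : V m, f Q
      = ∑ ab : (Fin m → ZMod 2) × (Fin m → ZMod 2), f (fun i => (ab.1 i, ab.2 i)) :=
    (Fintype.sum_equiv (Equiv.arrowProdEquivProdArrow (Fin m) (fun _ => ZMod 2) (fun _ => ZMod 2)).symm
      _ _ (fun ab => rfl)).symm
  rw [h, Fintype.sum_prod_type]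

lemma card_dot (α β : Fin m → ZMod 2) :
    (((Finset.univ.filter (fun i => α i = 1 ∧ β i = 1)).card : ℕ) : ZMod 2)
      = dot α β := by
  have h : ∀ a b : ZMod 2, a * b = if a = 1 ∧ b = 1 then (1 : ZMod 2) else 0 := by decide
  unfold dot
  simp_rw [h]
  exact (Finset.sum_boole _ _).symm

lemma phase_sq (α β : Fin m → ZMod 2) :
    Complex.I ^ (Finset.univ.filter (fun i => α i = 1 ∧ β i = 1)).card *
      Complex.I ^ (Finset.univ.filter (fun i => α i = 1 ∧ β i = 1)).card
      = chi (dot α β) := by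
  rw [← pow_add, ← two_mul, pow_mul, Complex.I_sq, ← chi_natCast, card_dot]

lemma Ipow_conj (c : ℕ) : Complex.I ^ c * (starRingEnd ℂ) (Complex.I ^ c) = 1 := by
  rw [map_pow, Complex.conj_I, ← mul_pow]
  simp

lemma iteMulIte {p q : Prop} [Decidable p] [Decidable q] (a b : ℂ) :
    (if p then a else 0) * (if q then b else 0) = if p ∧ q then a * b else 0 := by
  split_ifs with h1 h2 h3 h4 <;> simp_all

lemma fun_shift (x y z : Fin m → ZMod 2) : x = y + z ↔ z = x + y := by
  rw [funext_iff, funext_iff]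
  refine forall_congr' fun i => ?_
  simp only [Pi.add_apply]
  have : ∀ a b c : ZMod 2, (a = b + c) ↔ (c = a + b) := by decide
  exact this _ _ _

end Helpers

lemma pauli_sum {m : ℕ} (P : V m) (u u' q q'' : Fin m → ZMod 2) :
    ∑ Q : V m, chi (sympl P Q) * (W Q u u' * W Q q q'')
      = 2 ^ m * (W P q u' * (starRingEnd ℂ) (W P q'' u)) := by
  set A : Fin m → ZMod 2 := fun i => (P i).1 with hA
  set B : Fin m → ZMod 2 := fun i => (P i).2 with hB
  rw [sum_V]
  have hsummand : ∀ α β : Fin m → ZMod 2,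
      chi (sympl P (fun i => (α i, β i))) *
        (W (fun i => (α i, β i)) u u' * W (fun i => (α i, β i)) q q'')
      = ((if u = u' + α then 1 else 0) * (if q = q'' + α then 1 else 0) *
          chi (dot B α)) * chi (dot β (A + α + u' + q'')) := by
    intro α β
    rw [W_pair, W_pair, sympl_pair, chi_add, ← hA, ← hB]
    rw [dot_add_right, dot_add_right, dot_add_right, chi_add, chi_add, chi_add]
    have hph := phase_sq α β
    rw [dot_comm β A, dot_comm β α]
    calc chi (dot A β) * chi (dot B α) *
          (Complex.I ^ (Finset.univ.filter (fun i => α i = 1 ∧ β i = 1)).card *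
            chi (dot β u') * (if u = u' + α then 1 else 0) *
          (Complex.I ^ (Finset.univ.filter (fun i => α i = 1 ∧ β i = 1)).card *
            chi (dot β q'') * (if q = q'' + α then 1 else 0)))
        = (Complex.I ^ (Finset.univ.filter (fun i => α i = 1 ∧ β i = 1)).card *
            Complex.I ^ (Finset.univ.filter (fun i => α i = 1 ∧ β i = 1)).card) *
          (chi (dot A β) * chi (dot B α) * chi (dot β u') * chi (dot β q'') *
            ((if u = u' + α then 1 else 0) * (if q = q'' + α then 1 else 0))) := by
          ring
      _ = _ := by rw [hph]; ring
  simp_rw [hsummand]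
  have hinner : ∀ α : Fin m → ZMod 2,
      (∑ β : Fin m → ZMod 2,
        ((if u = u' + α then 1 else 0) * (if q = q'' + α then 1 else 0) *
          chi (dot B α)) * chi (dot β (A + α + u' + q'')))
      = ((if u = u' + α then 1 else 0) * (if q = q'' + α then 1 else 0) *
          chi (dot B α)) *
        (if A + α + u' + q'' = 0 then (2:ℂ) ^ m else 0) := by
    intro α
    rw [← Finset.mul_sum, char_sum]
  simp_rw [hinner, fun_shift u u' _]
  rw [Fintype.sum_eq_single (u + u') (fun α hα => by rw [if_neg hα]; ring)]
  rw [if_pos rfl, one_mul]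
  -- now pure ifs
  rw [W_apply P q u', W_apply P q'' u, ← hA, ← hB, _root_.map_mul, _root_.map_mul,
    chi_conj, apply_ite (starRingEnd ℂ), _root_.map_one, map_zero]
  have hconj := Ipow_conj (Finset.univ.filter (fun i => (P i).1 = 1 ∧ (P i).2 = 1)).card
  have key : ∀ X Y : ℂ, (2:ℂ)^m * (Complex.I ^ (Finset.univ.filter (fun i => (P i).1 = 1 ∧ (P i).2 = 1)).card * X *
      (if q = u' + A then 1 else 0) *
      ((starRingEnd ℂ) (Complex.I ^ (Finset.univ.filter (fun i => (P i).1 = 1 ∧ (P i).2 = 1)).card) * Y *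
        (if q'' = u + A then 1 else 0)))
      = (2:ℂ)^m * (X * Y * ((if q = u' + A then 1 else 0) * (if q'' = u + A then 1 else 0))) := by
    intro X Y
    calc _ = (Complex.I ^ (Finset.univ.filter (fun i => (P i).1 = 1 ∧ (P i).2 = 1)).card *
        (starRingEnd ℂ) (Complex.I ^ (Finset.univ.filter (fun i => (P i).1 = 1 ∧ (P i).2 = 1)).card)) *
        ((2:ℂ)^m * (X * Y * ((if q = u' + A then 1 else 0) * (if q'' = u + A then 1 else 0)))) := by ring
      _ = _ := by rw [hconj, one_mul]
  rw [key]
  have hiff : ((q = q'' + (u + u') ∧ A + (u + u') + u' + q'' = 0)) ↔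
      (q = u' + A ∧ q'' = u + A) := by
    rw [funext_iff, funext_iff, funext_iff, funext_iff, ← forall_and, ← forall_and]
    refine forall_congr' fun i => ?_
    simp only [Pi.add_apply, Pi.zero_apply]
    have : ∀ a b c d e : ZMod 2,
        ((a = b + (c + d) ∧ e + (c + d) + d + b = 0)) ↔ (a = d + e ∧ b = c + e) := by decide
    exact this _ _ _ _ _
  by_cases h : q = u' + A ∧ q'' = u + A
  · obtain ⟨hc1, hc2⟩ := hiff.mpr h
    rw [if_pos hc1, if_pos hc2, if_pos h.1, if_pos h.2, dot_add_right, chi_add]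
    ring
  · have h' := (not_iff_not.mpr hiff).mpr h
    rw [not_and_or] at h'
    have hL : (if q = q'' + (u + u') then (1:ℂ) else 0) * chi (dot B (u + u')) *
        (if A + (u + u') + u' + q'' = 0 then (2:ℂ) ^ m else 0) = 0 := by
      rcases h' with h' | h'
      · rw [if_neg h']; ring
      · rw [if_neg h']; ring
    rw [hL]
    rcases not_and_or.mp h with hh | hh <;> rw [if_neg hh] <;> ring

lemma std_apply {n : ℕ} (j l r v : Fin n → ZMod 2) :
    Matrix.single j l (1:ℂ) r v = if j = r ∧ l = v then 1 else 0 := rfl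

lemma Zpow_apply {n : ℕ} (x v v' : Fin n → ZMod 2) :
    Zpow x v v' = chi (dot x v') * (if v = v' then 1 else 0) := by
  show W (fun i => ((0 : Fin n → ZMod 2) i, x i)) v v' = _
  rw [W_pair]
  simp

lemma entry_T {m n : ℕ} (σ : MatP m n) (Q : V m) (x : Fin n → ZMod 2) :
    ((W Q ⊗ₖ Zpow x) * σ).trace
      = ∑ u : Fin m → ZMod 2, ∑ v : Fin n → ZMod 2, ∑ u' : Fin m → ZMod 2,
          W Q u u' * chi (dot x v) * σ (u', v) (u, v) := by
  rw [Matrix.trace]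
  rw [Fintype.sum_prod_type]
  refine Finset.sum_congr rfl fun u _ => Finset.sum_congr rfl fun v _ => ?_
  rw [Matrix.diag_apply, Matrix.mul_apply, Fintype.sum_prod_type]
  refine Finset.sum_congr rfl fun u' _ => ?_
  simp_rw [Matrix.kroneckerMap_apply, Zpow_apply]
  rw [Finset.sum_eq_single v (fun v' _ hv' => by rw [if_neg (fun h => hv' h.symm)]; ring)
    (fun h => absurd (Finset.mem_univ v) h)]
  rw [if_pos rfl]
  ring

lemma entry_L {m n : ℕ} (σ : MatP m n) (P : V m) (j l : Fin n → ZMod 2)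
    (q q'' : Fin m → ZMod 2) (r r'' : Fin n → ZMod 2) :
    ((W P ⊗ₖ Matrix.single j l (1:ℂ)) * σ *
        (W P ⊗ₖ Matrix.single j l (1:ℂ))ᴴ) (q, r) (q'', r'')
      = ((if r = j then 1 else 0) * (if r'' = j then 1 else 0)) *
          ∑ u : Fin m → ZMod 2, ∑ u' : Fin m → ZMod 2,
            W P q u * σ (u, l) (u', l) * (starRingEnd ℂ) (W P q'' u') := by
  rw [Matrix.mul_apply, Fintype.sum_prod_type]
  have hst : ∀ (u' : Fin m → ZMod 2) (v' : Fin n → ZMod 2),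
      ((W P ⊗ₖ Matrix.single j l (1:ℂ))ᴴ) (u', v') (q'', r'')
      = (starRingEnd ℂ) (W P q'' u') * (if j = r'' ∧ l = v' then 1 else 0) := by
    intro u' v'
    rw [Matrix.conjTranspose_apply, Matrix.kroneckerMap_apply, star_mul']
    congr 1
    show star (Matrix.single j l (1:ℂ) r'' v') = _
    rw [std_apply]
    split_ifs <;> simp
  simp_rw [hst, Matrix.mul_apply, Fintype.sum_prod_type, Matrix.kroneckerMap_apply,
    std_apply]
  have h1 : ∀ (u' : Fin m → ZMod 2) (v' : Fin n → ZMod 2),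
      ((∑ u : Fin m → ZMod 2, ∑ v : Fin n → ZMod 2,
        (W P q u * if j = r ∧ l = v then 1 else 0) * σ (u, v) (u', v')) *
        ((starRingEnd ℂ) (W P q'' u') * if j = r'' ∧ l = v' then 1 else 0))
      = ((if r = j then 1 else 0) * (if r'' = j ∧ v' = l then 1 else 0)) *
          ∑ u : Fin m → ZMod 2, W P q u * σ (u, l) (u', l) * (starRingEnd ℂ) (W P q'' u') := by
    intro u' v'
    by_cases hv' : v' = l
    · have hin : ∀ u : Fin m → ZMod 2, (∑ v : Fin n → ZMod 2,
          (W P q u * if j = r ∧ l = v then 1 else 0) * σ (u, v) (u', v'))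
          = (if j = r then 1 else 0) * (W P q u * σ (u, l) (u', v')) := by
        intro u
        rw [Finset.sum_eq_single l
          (fun v _ hv => by
            rw [if_neg (show ¬(j = r ∧ l = v) from fun h => hv h.2.symm)]; ring)
          (fun h => absurd (Finset.mem_univ l) h)]
        by_cases hj : j = r
        · rw [if_pos (show j = r ∧ l = l from ⟨hj, rfl⟩), if_pos hj]; ring
        · rw [if_neg (show ¬(j = r ∧ l = l) from fun h => hj h.1), if_neg hj]; ring
      simp_rw [hin, hv']
      simp only [and_true]
      by_cases hj : j = r <;> by_cases hj'' : j = r''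
      · rw [if_pos hj, if_pos hj'', if_pos (show r = j from hj.symm),
          if_pos (show r'' = j from hj''.symm)]
        try simp only [one_mul, mul_one]
        try rw [Finset.sum_mul]
        try exact Finset.sum_congr rfl fun u _ => by ring
      · rw [if_neg hj'', if_neg (show ¬(r'' = j) from fun h => hj'' h.symm)]
        try ring
      · rw [if_neg hj, if_neg (show ¬(r = j) from fun h => hj h.symm)]
        try simp only [zero_mul, Finset.sum_const_zero]
        try ring
      · rw [if_neg hj, if_neg (show ¬(r = j) from fun h => hj h.symm)]
        try simp only [zero_mul, Finset.sum_const_zero]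
        try ring
    · rw [if_neg (show ¬(j = r'' ∧ l = v') from fun h => hv' h.2.symm),
        if_neg (show ¬(r'' = j ∧ v' = l) from fun h => hv' h.2)]
      ring
  simp_rw [h1]
  have h2 : ∀ u' : Fin m → ZMod 2,
      (∑ v' : Fin n → ZMod 2,
        ((if r = j then (1:ℂ) else 0) * (if r'' = j ∧ v' = l then 1 else 0)) *
          ∑ u : Fin m → ZMod 2, W P q u * σ (u, l) (u', l) * (starRingEnd ℂ) (W P q'' u'))
      = ((if r = j then 1 else 0) * (if r'' = j then 1 else 0)) *
          ∑ u : Fin m → ZMod 2, W P q u * σ (u, l) (u', l) * (starRingEnd ℂ) (W P q'' u') := by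
    intro u'
    rw [Finset.sum_eq_single l
      (fun v' _ hv' => by
        rw [if_neg (show ¬(r'' = j ∧ v' = l) from fun h => hv' h.2)]; ring)
      (fun h => absurd (Finset.mem_univ l) h)]
    simp
  simp_rw [h2]
  rw [← Finset.mul_sum, Finset.sum_comm]

lemma gauss {n : ℕ} (k c w : Fin n → ZMod 2) :
    (∑ x : Fin n → ZMod 2, chi (dot k x) * chi (dot c x) * chi (dot x w))
      = if w = k + c then (2:ℂ)^n else 0 := by
  have h : ∀ x : Fin n → ZMod 2,
      chi (dot k x) * chi (dot c x) * chi (dot x w) = chi (dot x (k + c + w)) := by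
    intro x
    rw [dot_add_right, dot_add_right, chi_add, chi_add, dot_comm x k, dot_comm x c]
  have hiff : (k + c + w = 0) ↔ (w = k + c) := by
    rw [funext_iff, funext_iff]
    refine forall_congr' fun i => ?_
    simp only [Pi.add_apply, Pi.zero_apply]
    have : ∀ a b c : ZMod 2, (a + b + c = 0) ↔ (c = a + b) := by decide
    exact this _ _ _
  simp_rw [h, char_sum, hiff]

lemma key {m n : ℕ} (k : Fin n → ZMod 2) (σ : MatP m n) (a b : Fin n → ZMod 2) (P : V m)
    (q q'' : Fin m → ZMod 2) (r r'' : Fin n → ZMod 2) :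
    ((2:ℂ) ^ (2*n+m))⁻¹ *
      (∑ x : Fin n → ZMod 2, ∑ y : Fin n → ZMod 2, ∑ Q : V m,
        chi (dot k (x+y)) * chi (dot a x + dot b y + sympl P Q) *
          ((W Q ⊗ₖ Zpow x) * σ).trace * (W Q ⊗ₖ Zpow y) (q, r) (q'', r''))
    = ((W P ⊗ₖ Matrix.single (k+b) (k+a) (1:ℂ)) * σ *
        (W P ⊗ₖ Matrix.single (k+b) (k+a) (1:ℂ))ᴴ) (q, r) (q'', r'') := by
  rw [entry_L]
  have h0 : ∀ (x y : Fin n → ZMod 2) (Q : V m),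
      chi (dot k (x+y)) * chi (dot a x + dot b y + sympl P Q) *
        ((W Q ⊗ₖ Zpow x) * σ).trace * (W Q ⊗ₖ Zpow y) (q, r) (q'', r'')
      = (chi (dot k y) * chi (dot b y) * chi (dot y r'')) *
        ((if r = r'' then 1 else 0) * (chi (sympl P Q) * W Q q q'' *
          ((chi (dot k x) * chi (dot a x)) * ((W Q ⊗ₖ Zpow x) * σ).trace))) := by
    intro x y Q
    rw [Matrix.kroneckerMap_apply, Zpow_apply, dot_add_right, chi_add, chi_add, chi_add]
    ring
  simp_rw [h0]
  -- pull out the y-sum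
  have h1 : ∀ x : Fin n → ZMod 2,
      (∑ y : Fin n → ZMod 2, ∑ Q : V m,
        (chi (dot k y) * chi (dot b y) * chi (dot y r'')) *
          ((if r = r'' then 1 else 0) * (chi (sympl P Q) * W Q q q'' *
            ((chi (dot k x) * chi (dot a x)) * ((W Q ⊗ₖ Zpow x) * σ).trace))))
      = (if r'' = k + b then (2:ℂ)^n else 0) *
          ∑ Q : V m, (if r = r'' then 1 else 0) * (chi (sympl P Q) * W Q q q'' *
            ((chi (dot k x) * chi (dot a x)) * ((W Q ⊗ₖ Zpow x) * σ).trace)) := by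
    intro x
    simp_rw [← Finset.mul_sum]
    rw [← Finset.sum_mul, gauss]
  simp_rw [h1]
  rw [← Finset.mul_sum, Finset.sum_comm]
  -- now inner sums over x for fixed Q
  have h2 : ∀ Q : V m,
      (∑ x : Fin n → ZMod 2, (if r = r'' then (1:ℂ) else 0) * (chi (sympl P Q) * W Q q q'' *
        ((chi (dot k x) * chi (dot a x)) * ((W Q ⊗ₖ Zpow x) * σ).trace)))
      = (if r = r'' then 1 else 0) * (chi (sympl P Q) * W Q q q'' *
          ((2:ℂ)^n * ∑ u : Fin m → ZMod 2, ∑ u' : Fin m → ZMod 2,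
            W Q u u' * σ (u', k + a) (u, k + a))) := by
    intro Q
    rw [← Finset.mul_sum]
    congr 1
    rw [← Finset.mul_sum]
    congr 1
    -- ∑ x, α x * trace = 2^n * ∑ u ∑ u' ...
    simp_rw [entry_T]
    have hswap : (∑ x : Fin n → ZMod 2, (chi (dot k x) * chi (dot a x)) *
        ∑ u : Fin m → ZMod 2, ∑ v : Fin n → ZMod 2, ∑ u' : Fin m → ZMod 2,
          W Q u u' * chi (dot x v) * σ (u', v) (u, v))
        = ∑ u : Fin m → ZMod 2, ∑ v : Fin n → ZMod 2,
            (∑ x : Fin n → ZMod 2, chi (dot k x) * chi (dot a x) * chi (dot x v)) *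
              ∑ u' : Fin m → ZMod 2, W Q u u' * σ (u', v) (u, v) := by
      simp_rw [Finset.mul_sum]
      rw [Finset.sum_comm]
      refine Finset.sum_congr rfl fun u _ => ?_
      rw [Finset.sum_comm]
      refine Finset.sum_congr rfl fun v _ => ?_
      rw [Finset.sum_comm]
      refine Finset.sum_congr rfl fun u' _ => ?_
      rw [Finset.sum_mul]
      refine Finset.sum_congr rfl fun x _ => ?_
      ring
    rw [hswap]
    simp_rw [gauss]
    have hcol : ∀ u : Fin m → ZMod 2,
        (∑ v : Fin n → ZMod 2, (if v = k + a then (2:ℂ)^n else 0) *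
          ∑ u' : Fin m → ZMod 2, W Q u u' * σ (u', v) (u, v))
        = (2:ℂ)^n * ∑ u' : Fin m → ZMod 2, W Q u u' * σ (u', k + a) (u, k + a) := by
      intro u
      rw [Finset.sum_eq_single (k + a)
        (fun v _ hv => by rw [if_neg hv]; ring)
        (fun h => absurd (Finset.mem_univ _) h)]
      rw [if_pos rfl]
    simp_rw [hcol]
    rw [← Finset.mul_sum]
  simp_rw [h2]
  -- pull constants out of Q-sum and apply pauli_sum
  have h3 : (∑ Q : V m, (if r = r'' then (1:ℂ) else 0) * (chi (sympl P Q) * W Q q q'' *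
      ((2:ℂ)^n * ∑ u : Fin m → ZMod 2, ∑ u' : Fin m → ZMod 2,
        W Q u u' * σ (u', k + a) (u, k + a))))
      = (if r = r'' then 1 else 0) * ((2:ℂ)^n *
          ∑ u : Fin m → ZMod 2, ∑ u' : Fin m → ZMod 2,
            (2:ℂ)^m * (W P q u' * (starRingEnd ℂ) (W P q'' u)) * σ (u', k + a) (u, k + a)) := by
    rw [← Finset.mul_sum]
    congr 1
    have : ∀ Q : V m, chi (sympl P Q) * W Q q q'' *
        ((2:ℂ)^n * ∑ u : Fin m → ZMod 2, ∑ u' : Fin m → ZMod 2,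
          W Q u u' * σ (u', k + a) (u, k + a))
        = (2:ℂ)^n * ∑ u : Fin m → ZMod 2, ∑ u' : Fin m → ZMod 2,
            (chi (sympl P Q) * (W Q u u' * W Q q q'')) * σ (u', k + a) (u, k + a) := by
      intro Q
      simp_rw [Finset.mul_sum]
      refine Finset.sum_congr rfl fun u _ => Finset.sum_congr rfl fun u' _ => by ring
    simp_rw [this]
    rw [← Finset.mul_sum]
    congr 1
    rw [Finset.sum_comm]
    refine Finset.sum_congr rfl fun u _ => ?_
    rw [Finset.sum_comm]
    refine Finset.sum_congr rfl fun u' _ => ?_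
    rw [← Finset.sum_mul, pauli_sum]
  rw [h3]
  -- final bookkeeping
  have hPw : ∀ (u u' : Fin m → ZMod 2), (2:ℂ)^m * (W P q u' * (starRingEnd ℂ) (W P q'' u)) *
      σ (u', k + a) (u, k + a) = (2:ℂ)^m * (W P q u' * σ (u', k+a) (u, k+a) *
        (starRingEnd ℂ) (W P q'' u)) := by
    intro u u'
    ring
  simp_rw [hPw, ← Finset.mul_sum]
  have hsw : (∑ u : Fin m → ZMod 2, ∑ u' : Fin m → ZMod 2,
      W P q u' * σ (u', k+a) (u, k+a) * (starRingEnd ℂ) (W P q'' u))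
      = ∑ u : Fin m → ZMod 2, ∑ u' : Fin m → ZMod 2,
          W P q u * σ (u, k+a) (u', k+a) * (starRingEnd ℂ) (W P q'' u') :=
    Finset.sum_comm
  rw [hsw]
  -- constants and deltas
  have hdelta : (if r = r'' then (1:ℂ) else 0) * (if r'' = k + b then 1 else 0)
      = (if r = k + b then 1 else 0) * (if r'' = k + b then 1 else 0) := by
    by_cases h1' : r'' = k + b
    · by_cases h2' : r = r''
      · rw [if_pos h1', if_pos h2', if_pos (h2'.trans h1')]
      · rw [if_pos h1', if_neg h2',
          if_neg (show ¬(r = k + b) from fun h => h2' (h.trans h1'.symm))]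
    · rw [if_neg h1']
      ring
  have hsplit : (if r'' = k + b then (2:ℂ)^n else 0)
      = (2:ℂ)^n * (if r'' = k + b then 1 else 0) := by
    split_ifs <;> ring
  have hnz : (2:ℂ) ≠ 0 := two_ne_zero
  rw [hsplit, ← hdelta]
  field_simp
  split_ifs <;> ring

lemma sum_comm6 {α₁ α₂ α₃ β₁ β₂ β₃ M : Type*} [Fintype α₁] [Fintype α₂] [Fintype α₃]
    [Fintype β₁] [Fintype β₂] [Fintype β₃] [AddCommMonoid M]
    (f : α₁ → α₂ → α₃ → β₁ → β₂ → β₃ → M) :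
    (∑ a, ∑ b, ∑ c, ∑ x, ∑ y, ∑ z, f a b c x y z)
      = ∑ x, ∑ y, ∑ z, ∑ a, ∑ b, ∑ c, f a b c x y z := by
  trans ∑ a, ∑ b, ∑ x, ∑ c, ∑ y, ∑ z, f a b c x y z
  · exact Finset.sum_congr rfl fun a _ => Finset.sum_congr rfl fun b _ => Finset.sum_comm
  trans ∑ a, ∑ x, ∑ b, ∑ c, ∑ y, ∑ z, f a b c x y z
  · exact Finset.sum_congr rfl fun a _ => Finset.sum_comm
  trans ∑ x, ∑ a, ∑ b, ∑ c, ∑ y, ∑ z, f a b c x y z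
  · exact Finset.sum_comm
  refine Finset.sum_congr rfl fun x _ => ?_
  trans ∑ a, ∑ b, ∑ y, ∑ c, ∑ z, f a b c x y z
  · exact Finset.sum_congr rfl fun a _ => Finset.sum_congr rfl fun b _ => Finset.sum_comm
  trans ∑ a, ∑ y, ∑ b, ∑ c, ∑ z, f a b c x y z
  · exact Finset.sum_congr rfl fun a _ => Finset.sum_comm
  trans ∑ y, ∑ a, ∑ b, ∑ c, ∑ z, f a b c x y z
  · exact Finset.sum_comm
  refine Finset.sum_congr rfl fun y _ => ?_
  trans ∑ a, ∑ b, ∑ z, ∑ c, f a b c x y z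
  · exact Finset.sum_congr rfl fun a _ => Finset.sum_congr rfl fun b _ => Finset.sum_comm
  trans ∑ a, ∑ z, ∑ b, ∑ c, f a b c x y z
  · exact Finset.sum_congr rfl fun a _ => Finset.sum_comm
  exact Finset.sum_comm

/-- Dual-space form of a uniform stochastic instrument composed with a unitary
(Lemma 1 of the paper). -/
theorem stmt_2 (n m : ℕ)
    (p : (Fin n → ZMod 2) × (Fin n → ZMod 2) × V m → ℝ)
    (lam : (Fin n → ZMod 2) → (Fin n → ZMod 2) → V m → ℝ)
    (hlam : ∀ (x y : Fin n → ZMod 2) (Q : V m),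
      lam x y Q = ∑ a : Fin n → ZMod 2, ∑ b : Fin n → ZMod 2, ∑ P : V m,
        sgn (dot a x + dot b y + sympl P Q) * p (a, b, P))
    (G : MatP m n) (hG : G * Gᴴ = 1) (hG' : Gᴴ * G = 1)
    (k : Fin n → ZMod 2) (ρ : MatP m n) :
    ∑ a : Fin n → ZMod 2, ∑ b : Fin n → ZMod 2, ∑ P : V m,
      (p (a, b, P) : ℂ) •
        ((W P ⊗ₖ Matrix.single (k + b) (k + a) (1 : ℂ)) * (G * ρ * Gᴴ) *
          (W P ⊗ₖ Matrix.single (k + b) (k + a) (1 : ℂ))ᴴ)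
    = ((2 : ℂ) ^ (2 * n + m))⁻¹ •
        ∑ x : Fin n → ZMod 2, ∑ y : Fin n → ZMod 2, ∑ Q : V m,
          ((((sgn (dot k (x + y)) * lam x y Q : ℝ) : ℂ)) *
            (Gᴴ * (W Q ⊗ₖ Zpow x) * G * ρ).trace) • (W Q ⊗ₖ Zpow y) := by
  ext ⟨q, r⟩ ⟨q'', r''⟩
  simp only [Matrix.sum_apply, Matrix.smul_apply, smul_eq_mul]
  have htr : ∀ (Q : V m) (x : Fin n → ZMod 2),
      (Gᴴ * (W Q ⊗ₖ Zpow x) * G * ρ).trace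
        = ((W Q ⊗ₖ Zpow x) * (G * ρ * Gᴴ)).trace := by
    intro Q x
    have h1 : Gᴴ * (W Q ⊗ₖ Zpow x) * G * ρ = Gᴴ * ((W Q ⊗ₖ Zpow x) * (G * ρ)) := by
      rw [Matrix.mul_assoc, Matrix.mul_assoc]
    rw [h1, Matrix.trace_mul_comm, Matrix.mul_assoc]
  have hcast : ∀ (x y : Fin n → ZMod 2) (Q : V m),
      ((sgn (dot k (x + y)) * lam x y Q : ℝ) : ℂ)
        = chi (dot k (x + y)) *
            ∑ a : Fin n → ZMod 2, ∑ b : Fin n → ZMod 2, ∑ P : V m,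
              chi (dot a x + dot b y + sympl P Q) * (p (a, b, P) : ℂ) := by
    intro x y Q
    rw [hlam x y Q, Complex.ofReal_mul, sgn_cast]
    refine congrArg (fun z => chi (dot k (x + y)) * z) ?_
    push_cast
    refine Finset.sum_congr rfl fun a _ => Finset.sum_congr rfl fun b _ =>
      Finset.sum_congr rfl fun P _ => ?_
    rw [sgn_cast]
  have leafL : ∀ (a b : Fin n → ZMod 2) (P : V m),
      (p (a, b, P) : ℂ) *
        ((W P ⊗ₖ Matrix.single (k + b) (k + a) (1:ℂ)) * (G * ρ * Gᴴ) *
          (W P ⊗ₖ Matrix.single (k + b) (k + a) (1:ℂ))ᴴ) (q, r) (q'', r'')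
      = ∑ x : Fin n → ZMod 2, ∑ y : Fin n → ZMod 2, ∑ Q : V m,
          (p (a, b, P) : ℂ) * (((2:ℂ) ^ (2 * n + m))⁻¹ *
            (chi (dot k (x + y)) * chi (dot a x + dot b y + sympl P Q) *
              (Gᴴ * (W Q ⊗ₖ Zpow x) * G * ρ).trace *
              (W Q ⊗ₖ Zpow y) (q, r) (q'', r''))) := by
    intro a b P
    rw [← key k (G * ρ * Gᴴ) a b P q q'' r r'']
    simp_rw [← htr, Finset.mul_sum]
  have leafR : ∀ (x y : Fin n → ZMod 2) (Q : V m),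
      ((2:ℂ) ^ (2 * n + m))⁻¹ *
        ((((sgn (dot k (x + y)) * lam x y Q : ℝ) : ℂ) *
          (Gᴴ * (W Q ⊗ₖ Zpow x) * G * ρ).trace) *
          (W Q ⊗ₖ Zpow y) (q, r) (q'', r''))
      = ∑ a : Fin n → ZMod 2, ∑ b : Fin n → ZMod 2, ∑ P : V m,
          (p (a, b, P) : ℂ) * (((2:ℂ) ^ (2 * n + m))⁻¹ *
            (chi (dot k (x + y)) * chi (dot a x + dot b y + sympl P Q) *
              (Gᴴ * (W Q ⊗ₖ Zpow x) * G * ρ).trace *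
              (W Q ⊗ₖ Zpow y) (q, r) (q'', r''))) := by
    intro x y Q
    rw [hcast x y Q]
    rw [show ((2:ℂ) ^ (2 * n + m))⁻¹ *
        (((chi (dot k (x + y)) *
          ∑ a : Fin n → ZMod 2, ∑ b : Fin n → ZMod 2, ∑ P : V m,
            chi (dot a x + dot b y + sympl P Q) * (p (a, b, P) : ℂ)) *
          (Gᴴ * (W Q ⊗ₖ Zpow x) * G * ρ).trace) *
          (W Q ⊗ₖ Zpow y) (q, r) (q'', r''))
      = (∑ a : Fin n → ZMod 2, ∑ b : Fin n → ZMod 2, ∑ P : V m,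
            chi (dot a x + dot b y + sympl P Q) * (p (a, b, P) : ℂ)) *
          (((2:ℂ) ^ (2 * n + m))⁻¹ * (chi (dot k (x + y)) *
            (Gᴴ * (W Q ⊗ₖ Zpow x) * G * ρ).trace *
            (W Q ⊗ₖ Zpow y) (q, r) (q'', r''))) from by ring]
    rw [Finset.sum_mul]
    refine Finset.sum_congr rfl fun a _ => ?_
    rw [Finset.sum_mul]
    refine Finset.sum_congr rfl fun b _ => ?_
    rw [Finset.sum_mul]
    refine Finset.sum_congr rfl fun P _ => ?_
    ring
  trans (∑ a : Fin n → ZMod 2, ∑ b : Fin n → ZMod 2, ∑ P : V m,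
      ∑ x : Fin n → ZMod 2, ∑ y : Fin n → ZMod 2, ∑ Q : V m,
        (p (a, b, P) : ℂ) * (((2:ℂ) ^ (2 * n + m))⁻¹ *
          (chi (dot k (x + y)) * chi (dot a x + dot b y + sympl P Q) *
            (Gᴴ * (W Q ⊗ₖ Zpow x) * G * ρ).trace *
            (W Q ⊗ₖ Zpow y) (q, r) (q'', r''))))
  · exact Finset.sum_congr rfl fun a _ => Finset.sum_congr rfl fun b _ =>
      Finset.sum_congr rfl fun P _ => leafL a b P
  rw [sum_comm6]
  rw [Finset.mul_sum]
  refine Finset.sum_congr rfl fun x _ => ?_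
  rw [Finset.mul_sum]
  refine Finset.sum_congr rfl fun y _ => ?_
  rw [Finset.mul_sum]
  refine Finset.sum_congr rfl fun Q _ => ?_
  exact (leafR x y Q).symm
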